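/- (Theorem 1) For every k ≥ 1 and every y ∈ ℂ^k there exists z ∈ K_k(A, r₀) such that ‖r₀ − A z‖₂ ≤ ‖W‖₂ · ‖Λ y − 𝟙‖₂; consequently the k-th GMRES residual norm min_{z ∈ K_k(A,r₀)} ‖r₀ − A z‖₂ is bounded above by ‖W‖₂ · min_{y ∈ ℂ^k} ‖Λ y − 𝟙‖₂. -/

import Mathlib

/-- The Euclidean (ℓ²) norm of a complex vector. -/
noncomputable def euclNorm {m : ℕ} (x : Fin m → ℂ) : ℝ :=
  Real.sqrt (∑ t, ‖x t‖ ^ 2)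

/-- The operator 2-norm of a complex matrix (induced by Euclidean norms). -/
noncomputable def l2OpNorm {m k : ℕ} (W : Matrix (Fin m) (Fin k) ℂ) : ℝ :=
  ‖LinearMap.toContinuousLinearMap (Matrix.toEuclideanLin W)‖

lemma euclNorm_eq {m : ℕ} (x : Fin m → ℂ) :
    euclNorm x = ‖(WithLp.equiv 2 (Fin m → ℂ)).symm x‖ := by
  rw [EuclideanSpace.norm_eq]; rfl

lemma euclNorm_nonneg {m : ℕ} (x : Fin m → ℂ) : 0 ≤ euclNorm x :=
  Real.sqrt_nonneg _

lemma euclNorm_neg {m : ℕ} (x : Fin m → ℂ) : euclNorm (-x) = euclNorm x := by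
  simp [euclNorm]

lemma mulVec_sum' {a b : Type*} [Fintype a] [Fintype b] {α : Type*} (s : Finset α)
    (M : Matrix a b ℂ) (f : α → (b → ℂ)) :
    M.mulVec (∑ x ∈ s, f x) = ∑ x ∈ s, M.mulVec (f x) := by
  exact map_sum (Matrix.mulVecLin M) f s

lemma mulVec_euclNorm_le {m k : ℕ} (W : Matrix (Fin m) (Fin k) ℂ) (u : Fin k → ℂ) :
    euclNorm (W.mulVec u) ≤ l2OpNorm W * euclNorm u := by
  rw [euclNorm_eq, euclNorm_eq, WithLp.equiv_symm_apply, ← Matrix.toEuclideanLin_apply_piLp_toLp]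
  exact (LinearMap.toContinuousLinearMap (Matrix.toEuclideanLin W)).le_opNorm _

theorem gmres_residual_vandermonde_bound
    (n d : ℕ) (A : Matrix (Fin n) (Fin n) ℂ)
    (v : Fin d → (Fin n → ℂ)) (lam : Fin d → ℂ) (c : Fin d → ℂ)
    (hunit : ∀ i, euclNorm (v i) = 1)
    (heig : ∀ i, A.mulVec (v i) = lam i • v i)
    (hnz : ∀ i, lam i ≠ 0) (hdist : Function.Injective lam)
    (r₀ : Fin n → ℂ) (hr₀ : r₀ = ∑ i, c i • v i)
    (k : ℕ) (hk : 1 ≤ k)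
    (K : Submodule ℂ (Fin n → ℂ))
    (hK : K = Submodule.span ℂ (Set.range fun j : Fin k => (A ^ (j : ℕ)).mulVec r₀))
    (W : Matrix (Fin n) (Fin d) ℂ) (hW : W = Matrix.of fun t i => c i * v i t)
    (Λ : Matrix (Fin d) (Fin k) ℂ) (hΛ : Λ = Matrix.of fun i (j : Fin k) => lam i ^ ((j : ℕ) + 1)) :
    (∀ y : Fin k → ℂ, ∃ z ∈ K,
        euclNorm (r₀ - A.mulVec z) ≤ l2OpNorm W * euclNorm (Λ.mulVec y - fun _ => 1)) ∧
      (⨅ z : K, euclNorm (r₀ - A.mulVec (z : Fin n → ℂ))) ≤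
        l2OpNorm W * ⨅ y : Fin k → ℂ, euclNorm (Λ.mulVec y - fun _ => 1) := by
  -- powers on eigenvectors
  have hpow : ∀ (m : ℕ) (i : Fin d), (A ^ m).mulVec (v i) = lam i ^ m • v i := by
    intro m i
    induction m with
    | zero => simp [Matrix.one_mulVec]
    | succ m ih =>
        rw [pow_succ, ← Matrix.mulVec_mulVec, heig, Matrix.mulVec_smul, ih, smul_smul,
          pow_succ, mul_comm]
  have hpowr : ∀ m : ℕ, (A ^ m).mulVec r₀ = ∑ i, (c i * lam i ^ m) • v i := by
    intro m
    rw [hr₀, mulVec_sum']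
    refine Finset.sum_congr rfl fun i _ => ?_
    rw [Matrix.mulVec_smul, hpow, smul_smul, mul_comm]
  have main : ∀ y : Fin k → ℂ, ∃ z ∈ K,
      euclNorm (r₀ - A.mulVec z) ≤ l2OpNorm W * euclNorm (Λ.mulVec y - fun _ => 1) := by
    intro y
    refine ⟨∑ j : Fin k, y j • (A ^ (j : ℕ)).mulVec r₀, ?_, ?_⟩
    · rw [hK]
      exact Submodule.sum_mem _ fun j _ =>
        Submodule.smul_mem _ _ (Submodule.subset_span ⟨j, rfl⟩)
    · have key : r₀ - A.mulVec (∑ j : Fin k, y j • (A ^ (j : ℕ)).mulVec r₀)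
          = W.mulVec ((fun _ => 1) - Λ.mulVec y) := by
        have hA : A.mulVec (∑ j : Fin k, y j • (A ^ (j : ℕ)).mulVec r₀)
            = ∑ i, (c i * (Λ.mulVec y) i) • v i := by
          rw [mulVec_sum']
          have : ∀ j : Fin k, A.mulVec (y j • (A ^ (j : ℕ)).mulVec r₀)
              = ∑ i, (c i * (y j * lam i ^ ((j : ℕ) + 1))) • v i := by
            intro j
            rw [Matrix.mulVec_smul, Matrix.mulVec_mulVec, ← pow_succ', hpowr,
              Finset.smul_sum]
            refine Finset.sum_congr rfl fun i _ => ?_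
            rw [smul_smul]; ring_nf
          rw [Finset.sum_congr rfl fun j _ => this j, Finset.sum_comm]
          refine Finset.sum_congr rfl fun i _ => ?_
          rw [← Finset.sum_smul]
          congr 1
          simp only [hΛ, Matrix.mulVec, dotProduct, Matrix.of_apply, Finset.mul_sum]
          exact Finset.sum_congr rfl fun j _ => by ring
        funext t
        rw [Pi.sub_apply, congrFun hA t, congrFun hr₀ t]
        simp only [Finset.sum_apply, Pi.smul_apply, smul_eq_mul, Matrix.mulVec,
          dotProduct, hW, Matrix.of_apply, Pi.sub_apply]
        rw [← Finset.sum_sub_distrib]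
        refine Finset.sum_congr rfl fun i _ => ?_
        ring
      rw [key]
      calc euclNorm (W.mulVec ((fun _ => 1) - Λ.mulVec y))
          ≤ l2OpNorm W * euclNorm ((fun _ => 1) - Λ.mulVec y) := mulVec_euclNorm_le _ _
        _ = l2OpNorm W * euclNorm (Λ.mulVec y - fun _ => 1) := by
            rw [← euclNorm_neg (Λ.mulVec y - fun _ => 1), neg_sub]
  refine ⟨main, ?_⟩
  have hWnn : 0 ≤ l2OpNorm W := norm_nonneg _
  rw [Real.mul_iInf_of_nonneg hWnn]
  have hbdd : BddBelow (Set.range fun z : K => euclNorm (r₀ - A.mulVec (z : Fin n → ℂ))) :=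
    ⟨0, by rintro x ⟨z, rfl⟩; exact euclNorm_nonneg _⟩
  refine le_ciInf fun y => ?_
  obtain ⟨z, hz, hle⟩ := main y
  exact le_trans (ciInf_le hbdd ⟨z, hz⟩) hle
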